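/- Let m ≥ 3, Δ ≥ 1, and 1 ≤ p < m. For f_Δ(x) = |log|x||^Δ · 1_{|x| ≤ 1} on ℝ^m, the L^p norm of the gradient satisfies ‖∇f_Δ‖_p = Δ · ω(m)^{1/p} · Γ(p(Δ-1)+1)^{1/p} / (m-p)^{Δ-1+1/p}, where ω(m) = 2π^{m/2}/Γ(m/2). -/

import Mathlib

open MeasureTheory


open MeasureTheory Real Set Filter Metric ENNReal

theorem aux_lintegral_norm {E : Type*} [NormedAddCommGroup E] [NormedSpace ℝ E]
    [MeasurableSpace E] [BorelSpace E] [Nontrivial E] [FiniteDimensional ℝ E]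
    (μ : Measure E) [μ.IsAddHaarMeasure] (g : ℝ → ℝ≥0∞) (hg : Measurable g) :
    ∫⁻ x, g ‖x‖ ∂μ = (Module.finrank ℝ E) * μ (ball (0:E) 1) *
      ∫⁻ y in Ioi (0:ℝ), (ENNReal.ofReal (y ^ (Module.finrank ℝ E - 1))) * g y := by
  calc
    ∫⁻ x, g ‖x‖ ∂μ = ∫⁻ x : ({(0:E)}ᶜ : Set E), g ‖x.1‖ ∂(μ.comap (↑)) := by
      rw [lintegral_subtype_comap (measurableSet_singleton (0:E)).compl (fun x => g ‖x‖),
        restrict_compl_singleton]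
    _ = ∫⁻ x : sphere (0:E) 1 × Ioi (0:ℝ), g x.2
          ∂(μ.toSphere.prod (.volumeIoiPow (Module.finrank ℝ E - 1))) := by
      refine Eq.trans ?_ (μ.measurePreserving_homeomorphUnitSphereProd.lintegral_comp_emb
        (Homeomorph.measurableEmbedding _) (fun x => g x.2))
      refine lintegral_congr fun x => ?_
      rw [homeomorphUnitSphereProd_apply_snd_coe]
    _ = (μ.toSphere univ) * ∫⁻ y : Ioi (0:ℝ), g y ∂(.volumeIoiPow (Module.finrank ℝ E - 1)) := by
      refine (lintegral_prod _
        ((hg.comp (measurable_subtype_coe.comp measurable_snd)).aemeasurable)).trans ?_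
      simp [lintegral_const, mul_comm]
    _ = _ := by
      rw [Measure.toSphere_apply_univ]
      congr 1
      rw [Measure.volumeIoiPow, lintegral_withDensity_eq_lintegral_mul _
          ((measurable_subtype_coe.pow_const _).ennreal_ofReal)
          (g := fun y : Ioi (0:ℝ) => g ↑y) (by exact hg.comp measurable_subtype_coe)]
      simp only [Pi.mul_apply]
      exact lintegral_subtype_comap measurableSet_Ioi
        fun y => ENNReal.ofReal (y ^ (Module.finrank ℝ E - 1)) * g y

/-- Change of variables: the one-dimensional radial integral. -/
theorem aux_radial (m : ℕ) (hm : 3 ≤ m) (Δ p : ℝ) (hΔ : 1 ≤ Δ) (hp1 : 1 ≤ p) (hpm : p < m) :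
    IntegrableOn (fun y : ℝ => y ^ (m - 1) * (Δ * |Real.log y| ^ (Δ - 1) / y) ^ p) (Ioo 0 1) ∧
    ∫ y in Ioo (0:ℝ) 1, y ^ (m - 1) * (Δ * |Real.log y| ^ (Δ - 1) / y) ^ p
      = Δ ^ p * (((m:ℝ) - p) ^ (-(p * (Δ - 1) + 1)) * Real.Gamma (p * (Δ - 1) + 1)) := by
  have hp0 : (0:ℝ) < p := lt_of_lt_of_le one_pos hp1
  have hΔ0 : (0:ℝ) < Δ := lt_of_lt_of_le one_pos hΔ
  have hmp : (0:ℝ) < (m:ℝ) - p := by linarith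
  have ha : (0:ℝ) ≤ p * (Δ - 1) := by
    have : (0:ℝ) ≤ Δ - 1 := by linarith
    positivity
  set F : ℝ → ℝ := fun y => y ^ (m - 1) * (Δ * |Real.log y| ^ (Δ - 1) / y) ^ p with hF
  have hm1 : ((m - 1 : ℕ) : ℝ) = (m:ℝ) - 1 := by
    rw [Nat.cast_sub (by omega)]; norm_num
  -- pointwise identity after substitution y = exp (-t)
  have key : ∀ t ∈ Ioi (0:ℝ), |(-Real.exp (-t))| • F (Real.exp (-t))
      = Δ ^ p * (t ^ (p * (Δ - 1)) * Real.exp (-((m:ℝ) - p) * t)) := by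
    intro t ht
    have ht0 : (0:ℝ) < t := ht
    have hexp : Real.exp (-t) * Real.exp (-t * ((m:ℝ) - 1)) / Real.exp (-t * p)
        = Real.exp (-((m:ℝ) - p) * t) := by
      rw [← Real.exp_add, ← Real.exp_sub]
      ring_nf
    simp only [smul_eq_mul, abs_neg, abs_of_pos (Real.exp_pos _), hF]
    rw [Real.log_exp, abs_neg, abs_of_pos ht0,
      div_rpow (by positivity) (Real.exp_pos _).le,
      Real.mul_rpow hΔ0.le (by positivity),
      ← Real.rpow_natCast (Real.exp (-t)) (m - 1), ← Real.exp_mul, ← Real.exp_mul,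
      ← Real.rpow_mul ht0.le, hm1, mul_comm (Δ - 1) p, ← hexp]
    field_simp
  have himage : (fun t : ℝ => Real.exp (-t)) '' Ioi 0 = Ioo 0 1 := by
    ext y
    constructor
    · rintro ⟨t, ht, rfl⟩
      exact ⟨Real.exp_pos _, Real.exp_lt_one_iff.2 (by simpa using ht)⟩
    · rintro ⟨hy0, hy1⟩
      exact ⟨-Real.log y, by simpa using Real.log_neg hy0 hy1, by
        simp [Real.exp_log hy0]⟩
  have hderiv : ∀ t ∈ Ioi (0:ℝ), HasDerivWithinAt (fun t : ℝ => Real.exp (-t))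
      (-Real.exp (-t)) (Ioi 0) t := by
    intro t _
    have : HasDerivAt (fun t : ℝ => Real.exp (-t)) (Real.exp (-t) * (-1)) t :=
      (Real.hasDerivAt_exp (-t)).comp t (hasDerivAt_neg' t)
    simpa [mul_neg_one] using this.hasDerivWithinAt
  have hinj : InjOn (fun t : ℝ => Real.exp (-t)) (Ioi 0) := fun a _ b _ h => by
    have := Real.exp_injective h
    linarith [neg_inj.1 this]
  -- integrability and value of the Gamma-type integral
  have hint : IntegrableOn
      (fun t : ℝ => Δ ^ p * (t ^ (p * (Δ - 1)) * Real.exp (-((m:ℝ) - p) * t))) (Ioi 0) := by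
    have := (integrableOn_rpow_mul_exp_neg_mul_rpow
      (by linarith : (-1:ℝ) < p * (Δ - 1)) one_pos hmp)
    refine ((this.congr_fun (fun t ht => ?_) measurableSet_Ioi).const_mul _)
    rw [Real.rpow_one]
  have hval : ∫ t in Ioi (0:ℝ), Δ ^ p * (t ^ (p * (Δ - 1)) * Real.exp (-((m:ℝ) - p) * t))
      = Δ ^ p * (((m:ℝ) - p) ^ (-(p * (Δ - 1) + 1)) * Real.Gamma (p * (Δ - 1) + 1)) := by
    rw [integral_const_mul]
    congr 1
    have := integral_rpow_mul_exp_neg_mul_rpow (one_pos)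
      (by linarith : (-1:ℝ) < p * (Δ - 1)) hmp
    rw [show ∫ t in Ioi (0:ℝ), t ^ (p * (Δ - 1)) * Real.exp (-((m:ℝ) - p) * t)
        = ∫ t in Ioi (0:ℝ), t ^ (p * (Δ - 1)) * Real.exp (-((m:ℝ) - p) * t ^ (1:ℝ)) from
      setIntegral_congr_fun measurableSet_Ioi (fun t _ => by rw [Real.rpow_one]), this]
    norm_num
  constructor
  · rw [← himage,
      integrableOn_image_iff_integrableOn_abs_deriv_smul measurableSet_Ioi hderiv hinj]
    exact hint.congr_fun (fun t ht => (key t ht).symm) measurableSet_Ioi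
  · rw [← himage, integral_image_eq_integral_abs_deriv_smul measurableSet_Ioi hderiv hinj,
      setIntegral_congr_fun measurableSet_Ioi key, hval]

theorem aux_fderiv_in {E : Type*} [NormedAddCommGroup E] [InnerProductSpace ℝ E] [Nontrivial E]
    (Δ : ℝ) (hΔ : 1 ≤ Δ) {x : E} (hx0 : x ≠ 0) (hx1 : ‖x‖ < 1) :
    ‖fderiv ℝ (fun y : E => if ‖y‖ ≤ 1 then |Real.log ‖y‖| ^ Δ else 0) x‖
      = Δ * |Real.log ‖x‖| ^ (Δ - 1) / ‖x‖ := by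
  have hΔ0 : (0:ℝ) < Δ := lt_of_lt_of_le one_pos hΔ
  have h0 : (0:ℝ) < ‖x‖ := norm_pos_iff.2 hx0
  have hlog : Real.log ‖x‖ < 0 := Real.log_neg h0 hx1
  have hd : DifferentiableAt ℝ (‖·‖) x := (contDiffAt_norm ℝ (n := 1) hx0).differentiableAt one_ne_zero
  have hN : HasFDerivAt (‖·‖) (fderiv ℝ (‖·‖) x) x := hd.hasFDerivAt
  have hlog' : HasDerivAt (fun r : ℝ => -Real.log r) (-(‖x‖)⁻¹) ‖x‖ :=
    (Real.hasDerivAt_log h0.ne').neg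
  have hφ : HasDerivAt (fun r : ℝ => (-Real.log r) ^ Δ)
      (-(‖x‖)⁻¹ * Δ * (-Real.log ‖x‖) ^ (Δ - 1)) ‖x‖ := hlog'.rpow_const (Or.inr hΔ)
  have hc : HasFDerivAt (fun y : E => (-Real.log ‖y‖) ^ Δ)
      ((-(‖x‖)⁻¹ * Δ * (-Real.log ‖x‖) ^ (Δ - 1)) • fderiv ℝ (‖·‖) x) x :=
    hφ.comp_hasFDerivAt x hN
  have hev : (fun y : E => if ‖y‖ ≤ 1 then |Real.log ‖y‖| ^ Δ else 0)
      =ᶠ[nhds x] fun y : E => (-Real.log ‖y‖) ^ Δ := by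
    have hU : IsOpen {y : E | 0 < ‖y‖ ∧ ‖y‖ < 1} :=
      (isOpen_lt continuous_const continuous_norm).inter
        (isOpen_lt continuous_norm continuous_const)
    filter_upwards [hU.mem_nhds ⟨h0, hx1⟩] with y hy
    rw [if_pos hy.2.le, abs_of_neg (Real.log_neg hy.1 hy.2)]
  rw [hev.fderiv_eq, hc.fderiv, norm_smul, norm_fderiv_norm hd, mul_one, Real.norm_eq_abs,
    abs_mul, abs_mul, abs_neg, abs_inv, abs_norm, abs_of_pos hΔ0,
    abs_of_pos (Real.rpow_pos_of_pos (by linarith) _), abs_of_neg hlog]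
  ring

theorem aux_fderiv_out {E : Type*} [NormedAddCommGroup E] [NormedSpace ℝ E]
    (Δ : ℝ) {x : E} (hx1 : 1 < ‖x‖) :
    fderiv ℝ (fun y : E => if ‖y‖ ≤ 1 then |Real.log ‖y‖| ^ Δ else 0) x = 0 := by
  have hev : (fun y : E => if ‖y‖ ≤ 1 then |Real.log ‖y‖| ^ Δ else 0)
      =ᶠ[nhds x] fun _ : E => (0:ℝ) := by
    have hU : IsOpen {y : E | 1 < ‖y‖} := isOpen_lt continuous_const continuous_norm
    filter_upwards [hU.mem_nhds hx1] with y hy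
    rw [if_neg (not_le.2 hy)]
  rw [hev.fderiv_eq]
  exact fderiv_const_apply 0

theorem aux_arith (m : ℕ) (hm : 3 ≤ m) (Δ p : ℝ) (hΔ : 1 ≤ Δ) (hp1 : 1 ≤ p) (hpm : p < m) :
    ((m:ℝ) * (Real.sqrt π ^ m / Real.Gamma ((m:ℝ)/2 + 1)) *
      (Δ ^ p * (((m:ℝ) - p) ^ (-(p * (Δ - 1) + 1)) * Real.Gamma (p * (Δ - 1) + 1)))) ^ (1/p)
    = Δ * (2 * π ^ ((m:ℝ)/2) / Real.Gamma ((m:ℝ)/2)) ^ (1/p) *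
        Real.Gamma (p * (Δ - 1) + 1) ^ (1/p) / ((m:ℝ) - p) ^ (Δ - 1 + 1/p) := by
  have hp0 : (0:ℝ) < p := lt_of_lt_of_le one_pos hp1
  have hΔ0 : (0:ℝ) < Δ := lt_of_lt_of_le one_pos hΔ
  have hm0 : (0:ℝ) < m := by exact_mod_cast lt_of_lt_of_le (by norm_num) hm
  have hmp : (0:ℝ) < (m:ℝ) - p := by linarith
  have ha : (0:ℝ) ≤ p * (Δ - 1) := mul_nonneg hp0.le (by linarith)
  have hΓ2 : 0 < Real.Gamma ((m:ℝ)/2) := Real.Gamma_pos_of_pos (by positivity)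
  have hG : (0:ℝ) ≤ Real.Gamma (p * (Δ - 1) + 1) :=
    (Real.Gamma_pos_of_pos (by linarith)).le
  have hs : Real.sqrt π ^ m = π ^ ((m:ℝ)/2) := by
    rw [Real.sqrt_eq_rpow, ← Real.rpow_natCast (π ^ (1/(2:ℝ))) m, ← Real.rpow_mul pi_pos.le]
    congr 1
    ring
  have hA : (m:ℝ) * (Real.sqrt π ^ m / Real.Gamma ((m:ℝ)/2 + 1))
      = 2 * π ^ ((m:ℝ)/2) / Real.Gamma ((m:ℝ)/2) := by
    rw [hs, Real.Gamma_add_one (by positivity : ((m:ℝ)/2) ≠ 0)]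
    field_simp
  have hω : (0:ℝ) ≤ 2 * π ^ ((m:ℝ)/2) / Real.Gamma ((m:ℝ)/2) :=
    div_nonneg (by positivity) hΓ2.le
  have hB : (0:ℝ) ≤ ((m:ℝ) - p) ^ (-(p * (Δ - 1) + 1)) := Real.rpow_nonneg hmp.le _
  rw [hA, Real.mul_rpow hω (by positivity), Real.mul_rpow (Real.rpow_nonneg hΔ0.le p)
      (mul_nonneg hB hG), Real.mul_rpow hB hG,
    ← Real.rpow_mul hΔ0.le, mul_one_div_cancel hp0.ne', Real.rpow_one,
    ← Real.rpow_mul hmp.le,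
    show -(p * (Δ - 1) + 1) * (1/p) = -(Δ - 1 + 1/p) by field_simp,
    Real.rpow_neg hmp.le]
  ring

theorem lp_norm_gradient_log_power (m : ℕ) (hm : 3 ≤ m) (Δ p : ℝ)
    (hΔ : 1 ≤ Δ) (hp1 : 1 ≤ p) (hpm : p < m) :
    eLpNorm (fun x : EuclideanSpace ℝ (Fin m) =>
        ‖fderiv ℝ (fun y : EuclideanSpace ℝ (Fin m) =>
          if ‖y‖ ≤ 1 then |Real.log ‖y‖| ^ Δ else 0) x‖) (ENNReal.ofReal p) volume
      = ENNReal.ofReal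
          (Δ * (2 * Real.pi ^ ((m : ℝ) / 2) / Real.Gamma ((m : ℝ) / 2)) ^ (1 / p) *
            Real.Gamma (p * (Δ - 1) + 1) ^ (1 / p) / ((m : ℝ) - p) ^ (Δ - 1 + 1 / p)) := by
  have hp0 : (0:ℝ) < p := lt_of_lt_of_le one_pos hp1
  have hΔ0 : (0:ℝ) < Δ := lt_of_lt_of_le one_pos hΔ
  haveI : Nonempty (Fin m) := ⟨⟨0, by omega⟩⟩
  haveI : Nontrivial (EuclideanSpace ℝ (Fin m)) := by infer_instance
  set g : ℝ → ℝ := fun r => if 0 < r ∧ r < 1 then Δ * |Real.log r| ^ (Δ - 1) / r else 0 with hg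
  have hgnn : ∀ r, 0 ≤ g r := by
    intro r
    rw [hg]
    dsimp only
    split
    · next h => exact div_nonneg (by positivity) h.1.le
    · exact le_rfl
  have hg_meas : Measurable g := by
    refine Measurable.ite (measurableSet_Ioo (a := (0:ℝ)) (b := 1)) ?_ measurable_const
    measurability
  -- a.e. identification of the gradient
  have hae : (fun x : EuclideanSpace ℝ (Fin m) => ‖fderiv ℝ (fun y : EuclideanSpace ℝ (Fin m) =>
      if ‖y‖ ≤ 1 then |Real.log ‖y‖| ^ Δ else 0) x‖) =ᵐ[volume] fun x => g ‖x‖ := by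
    have hnull : volume (sphere (0:EuclideanSpace ℝ (Fin m)) 1
        ∪ {(0:EuclideanSpace ℝ (Fin m))}) = 0 :=
      measure_union_null (Measure.addHaar_sphere _ _ _) (measure_singleton _)
    refine (measure_eq_zero_iff_ae_notMem.1 hnull).mono fun x hx => ?_
    simp only [mem_union, mem_sphere_iff_norm, sub_zero, mem_singleton_iff, not_or] at hx
    obtain ⟨hxs, hx0⟩ := hx
    dsimp only
    rcases lt_or_gt_of_ne hxs with hlt | hgt
    · rw [aux_fderiv_in Δ hΔ hx0 hlt, hg]
      dsimp only
      rw [if_pos ⟨norm_pos_iff.2 hx0, hlt⟩]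
    · rw [aux_fderiv_out Δ hgt, norm_zero, hg]
      dsimp only
      rw [if_neg (fun hc => absurd hc.2 (not_lt.2 hgt.le))]
  rw [eLpNorm_congr_ae hae,
    eLpNorm_eq_lintegral_rpow_enorm_toReal (ENNReal.ofReal_pos.2 hp0).ne' ENNReal.ofReal_ne_top,
    ENNReal.toReal_ofReal hp0.le]
  have hpt : ∀ x : EuclideanSpace ℝ (Fin m),
      ‖g ‖x‖‖ₑ ^ p = ENNReal.ofReal ((g ‖x‖) ^ p) := fun x => by
    rw [Real.enorm_eq_ofReal (hgnn _), ENNReal.ofReal_rpow_of_nonneg (hgnn _) hp0.le]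
  rw [lintegral_congr hpt,
    aux_lintegral_norm volume (fun y => ENNReal.ofReal ((g y) ^ p))
      (by exact (hg_meas.pow measurable_const).ennreal_ofReal)]
  rw [show Module.finrank ℝ (EuclideanSpace ℝ (Fin m)) = m from finrank_euclideanSpace_fin]
  -- the radial integral
  have hIoi : ∫⁻ y in Ioi (0:ℝ), ENNReal.ofReal (y ^ (m - 1)) * ENNReal.ofReal ((g y) ^ p)
      = ENNReal.ofReal (Δ ^ p * (((m:ℝ) - p) ^ (-(p * (Δ - 1) + 1))
          * Real.Gamma (p * (Δ - 1) + 1))) := by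
    obtain ⟨hint, hval⟩ := aux_radial m hm Δ p hΔ hp1 hpm
    rw [← Ioo_union_Ici_eq_Ioi (zero_lt_one (α := ℝ)),
      lintegral_union measurableSet_Ici (Iio_disjoint_Ici le_rfl |>.mono_left Ioo_subset_Iio_self)]
    have h2 : ∫⁻ y in Ici (1:ℝ), ENNReal.ofReal (y ^ (m-1)) * ENNReal.ofReal ((g y) ^ p) = 0 := by
      rw [setLIntegral_congr_fun measurableSet_Ici (fun y hy => ?_), lintegral_zero]
      have hgy : g y = 0 := if_neg (fun hc => absurd hc.2 (not_lt.2 hy))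
      rw [hgy, Real.zero_rpow hp0.ne', ENNReal.ofReal_zero, mul_zero]
    have h1 : ∫⁻ y in Ioo (0:ℝ) 1, ENNReal.ofReal (y ^ (m-1)) * ENNReal.ofReal ((g y) ^ p)
        = ENNReal.ofReal (∫ y in Ioo (0:ℝ) 1,
            y ^ (m - 1) * (Δ * |Real.log y| ^ (Δ - 1) / y) ^ p) := by
      rw [setLIntegral_congr_fun measurableSet_Ioo (fun y hy => ?_)]
      · refine (ofReal_integral_eq_lintegral_ofReal hint ?_).symm
        filter_upwards [ae_restrict_mem measurableSet_Ioo] with y hy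
        exact mul_nonneg (pow_nonneg hy.1.le _) (Real.rpow_nonneg
          (div_nonneg (by positivity) hy.1.le) _)
      · rw [← ENNReal.ofReal_mul (pow_nonneg hy.1.le _)]
        congr 2
        rw [hg]
        dsimp only
        rw [if_pos (⟨hy.1, hy.2⟩ : 0 < y ∧ y < 1)]
    rw [h1, h2, add_zero, hval]
  rw [hIoi, EuclideanSpace.volume_ball, Fintype.card_fin, ENNReal.ofReal_one, one_pow, one_mul,
    ← ENNReal.ofReal_natCast m,
    ← ENNReal.ofReal_mul (Nat.cast_nonneg m),
    ← ENNReal.ofReal_mul (mul_nonneg (Nat.cast_nonneg m) (div_nonneg (by positivity)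
      (Real.Gamma_pos_of_pos (by positivity)).le)),
    ENNReal.ofReal_rpow_of_nonneg ?_ (by positivity)]
  · exact congrArg _ (aux_arith m hm Δ p hΔ hp1 hpm)
  · have h1 : (0:ℝ) ≤ (m:ℝ) * (Real.sqrt π ^ m / Real.Gamma ((m:ℝ)/2 + 1)) :=
      mul_nonneg (Nat.cast_nonneg m) (div_nonneg (by positivity)
        (Real.Gamma_pos_of_pos (by positivity)).le)
    have h2 : (0:ℝ) ≤ Δ ^ p * (((m:ℝ) - p) ^ (-(p * (Δ - 1) + 1))
        * Real.Gamma (p * (Δ - 1) + 1)) := by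
      have : (0:ℝ) < (m:ℝ) - p := by linarith
      exact mul_nonneg (Real.rpow_nonneg hΔ0.le _) (mul_nonneg (Real.rpow_nonneg this.le _)
        (Real.Gamma_pos_of_pos (by nlinarith)).le)
    exact mul_nonneg h1 h2
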